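/- Let a, b ∈ ℝ satisfy a + b > 1, 2a + b > 2, and a > 1/2. Then ∬_{ℝ×ℝ} (1+|x|)^{−a}·(1+|y|)^{−a}·(1+|x−y|)^{−b} dx dy < ∞. Consequently, there exists a constant C such that ∬_{ℝ×ℝ} (1+|x|)^{−a}·(1+|y|)^{−a}·(1+|x−y|)^{−b}·|f(x)|·|g(y)| dx dy ≤ C·‖f‖_{L^∞(ℝ)}·‖g‖_{L^∞(ℝ)} for all f, g ∈ L^∞(ℝ). -/

import Mathlib

open MeasureTheory
open scoped ENNReal

noncomputable section


theorem sw_step (a b q s t : ℝ) (ha : 0 < a) (hb : 0 ≤ b) (hq0 : 0 ≤ q)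
    (hq2 : q ≤ 2*a) (hq3 : q ≤ a + b/2) (ht : 0 ≤ t) (hts : t ≤ s) :
    (1+s)^(-a) * (1+t)^(-a) * (1+(s-t))^(-b) ≤ (1+t)^(-q) * (1+(s-t))^(-q) := by
  have hs0 : 0 ≤ s := le_trans ht hts
  set θ : ℝ := min (b/(2*a)) 1 with hθdef
  have hθ0 : 0 ≤ θ := le_min (by positivity) one_pos.le
  have hθ1 : θ ≤ 1 := min_le_right _ _
  have ht1 : (1:ℝ) ≤ 1 + t := by linarith
  have hs1 : (1:ℝ) ≤ 1 + s := by linarith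
  have hd1 : (1:ℝ) ≤ 1 + (s - t) := by linarith
  have e1 : q ≤ a*θ + a := by
    rcases le_total (b/(2*a)) 1 with h | h
    · have hθ : θ = b/(2*a) := min_eq_left h
      have : a * θ = b/2 := by rw [hθ]; field_simp
      linarith
    · have hθ : θ = 1 := min_eq_right h
      rw [hθ]; linarith
  have e2 : q ≤ a*(1-θ) + b := by
    rcases le_total (b/(2*a)) 1 with h | h
    · have hθ : θ = b/(2*a) := min_eq_left h
      have : a * θ = b/2 := by rw [hθ]; field_simp
      nlinarith
    · have hθ : θ = 1 := min_eq_right h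
      have h2ab : 2*a ≤ b := by
        exact (one_le_div (by linarith : (0:ℝ) < 2*a)).mp h
      rw [hθ]; simp; linarith
  have hgm : (1+t)^θ * (1+(s-t))^(1-θ) ≤ 1 + s := by
    calc (1+t)^θ * (1+(s-t))^(1-θ)
        ≤ (1+s)^θ * (1+s)^(1-θ) :=
          mul_le_mul (Real.rpow_le_rpow (by linarith) (by linarith) hθ0)
            (Real.rpow_le_rpow (by linarith) (by linarith) (by linarith))
            (Real.rpow_nonneg (by linarith) _) (Real.rpow_nonneg (by linarith) _)
      _ = 1 + s := by rw [← Real.rpow_add (by linarith)]; simp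
  have hsa : (1+s)^(-a) ≤ (1+t)^(-(a*θ)) * (1+(s-t))^(-(a*(1-θ))) := by
    have hp1 : (0:ℝ) < (1+t)^θ := Real.rpow_pos_of_pos (by linarith) _
    have hp2 : (0:ℝ) < (1+(s-t))^(1-θ) := Real.rpow_pos_of_pos (by linarith) _
    calc (1+s)^(-a) ≤ ((1+t)^θ * (1+(s-t))^(1-θ))^(-a) :=
        Real.rpow_le_rpow_of_nonpos (by positivity) hgm (by linarith)
      _ = (1+t)^(-(a*θ)) * (1+(s-t))^(-(a*(1-θ))) := by
        rw [Real.mul_rpow hp1.le hp2.le, ← Real.rpow_mul (by linarith),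
          ← Real.rpow_mul (by linarith)]
        congr 1 <;> · congr 1; ring
  calc (1+s)^(-a) * (1+t)^(-a) * (1+(s-t))^(-b)
      ≤ ((1+t)^(-(a*θ)) * (1+(s-t))^(-(a*(1-θ)))) * (1+t)^(-a) * (1+(s-t))^(-b) := by
        apply mul_le_mul_of_nonneg_right _ (Real.rpow_nonneg (by linarith) _)
        exact mul_le_mul_of_nonneg_right hsa (Real.rpow_nonneg (by linarith) _)
    _ = (1+t)^(-(a*θ) + -a) * (1+(s-t))^(-(a*(1-θ)) + -b) := by
        rw [Real.rpow_add (by linarith : (0:ℝ) < 1+t), Real.rpow_add (by linarith : (0:ℝ) < 1+(s-t))]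
        ring
    _ ≤ (1+t)^(-q) * (1+(s-t))^(-q) := by
        apply mul_le_mul (Real.rpow_le_rpow_of_exponent_le ht1 (by linarith))
          (Real.rpow_le_rpow_of_exponent_le hd1 (by linarith))
          (Real.rpow_nonneg (by linarith) _) (Real.rpow_nonneg (by linarith) _)

theorem sw_kernel (a b q : ℝ) (ha : 0 < a) (hq0 : 0 ≤ q) (hq1 : q ≤ a + b)
    (hq2 : q ≤ 2*a) (hq3 : q ≤ a + b/2) (x y : ℝ) :
    (1 + |x|) ^ (-a) * (1 + |y|) ^ (-a) * (1 + |x - y|) ^ (-b) ≤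
      (1 + |x|) ^ (-q) * (1 + |y|) ^ (-q)
      + ((1 + |y|) ^ (-q) * (1 + |x - y|) ^ (-q)
        + (1 + |x|) ^ (-q) * (1 + |x - y|) ^ (-q)) := by
  have hx1 : (1:ℝ) ≤ 1 + |x| := by have := abs_nonneg x; linarith
  have hy1 : (1:ℝ) ≤ 1 + |y| := by have := abs_nonneg y; linarith
  have hw1 : (1:ℝ) ≤ 1 + |x - y| := by have := abs_nonneg (x-y); linarith
  rcases lt_or_ge b 0 with hb | hb
  · -- b < 0 : use 1+|x-y| ≤ (1+|x|)(1+|y|)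
    have hw_le : 1 + |x - y| ≤ (1+|x|) * (1+|y|) := by
      have h1 : |x - y| ≤ |x| + |y| := by
        simpa [sub_eq_add_neg] using abs_add_le x (-y)
      nlinarith [abs_nonneg x, abs_nonneg y]
    have h1 : (1+|x-y|)^(-b) ≤ ((1+|x|)*(1+|y|))^(-b) :=
      Real.rpow_le_rpow (by linarith) hw_le (by linarith)
    have hmain : (1 + |x|) ^ (-a) * (1 + |y|) ^ (-a) * (1 + |x - y|) ^ (-b) ≤
        (1 + |x|) ^ (-q) * (1 + |y|) ^ (-q) := by
      calc (1 + |x|) ^ (-a) * (1 + |y|) ^ (-a) * (1 + |x - y|) ^ (-b)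
          ≤ (1 + |x|) ^ (-a) * (1 + |y|) ^ (-a) * (((1+|x|)*(1+|y|))^(-b)) := by
            apply mul_le_mul_of_nonneg_left h1 (by positivity)
        _ = (1 + |x|) ^ (-a + -b) * (1 + |y|) ^ (-a + -b) := by
            rw [Real.mul_rpow (by linarith) (by linarith),
              Real.rpow_add (by linarith : (0:ℝ) < 1+|x|),
              Real.rpow_add (by linarith : (0:ℝ) < 1+|y|)]
            ring
        _ ≤ (1 + |x|) ^ (-q) * (1 + |y|) ^ (-q) :=
            mul_le_mul (Real.rpow_le_rpow_of_exponent_le hx1 (by linarith))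
              (Real.rpow_le_rpow_of_exponent_le hy1 (by linarith))
              (Real.rpow_nonneg (by linarith) _) (Real.rpow_nonneg (by linarith) _)
    have : (0:ℝ) ≤ (1 + |y|) ^ (-q) * (1 + |x - y|) ^ (-q)
        + (1 + |x|) ^ (-q) * (1 + |x - y|) ^ (-q) := by positivity
    linarith
  · -- 0 ≤ b
    have habs : |x - y| = |(|x|) - (|y|)| ∨ |x - y| = |x| + |y| := by
      rcases le_total 0 x with hx | hx <;> rcases le_total 0 y with hy | hy
      · left; rw [abs_of_nonneg hx, abs_of_nonneg hy]
      · right; rw [abs_of_nonneg hx, abs_of_nonpos hy,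
          abs_of_nonneg (by linarith : (0:ℝ) ≤ x - y)]; ring
      · right; rw [abs_of_nonpos hx, abs_of_nonneg hy,
          abs_of_nonpos (by linarith : x - y ≤ 0)]; ring
      · left; rw [abs_of_nonpos hx, abs_of_nonpos hy]
        rw [show -x - -y = -(x - y) by ring, abs_neg]
    rcases habs with hsame | hopp
    · rcases le_total (|y|) (|x|) with hyx | hxy
      · have hd : |x - y| = |x| - |y| := by
          rw [hsame, abs_of_nonneg (by linarith : (0:ℝ) ≤ |x| - |y|)]
        have hstep := sw_step a b q (|x|) (|y|) ha hb hq0 hq2 hq3 (abs_nonneg y) hyx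
        rw [hd]
        have h0 : (0:ℝ) ≤ (1 + |x|) ^ (-q) * (1 + |y|) ^ (-q) := by positivity
        have h1 : (0:ℝ) ≤ (1 + |x|) ^ (-q) * (1 + (|x| - |y|)) ^ (-q) :=
          mul_nonneg (Real.rpow_nonneg (by linarith) _) (Real.rpow_nonneg (by linarith) _)
        calc (1 + |x|) ^ (-a) * (1 + |y|) ^ (-a) * (1 + (|x| - |y|)) ^ (-b)
            ≤ (1 + |y|) ^ (-q) * (1 + (|x| - |y|)) ^ (-q) := hstep
          _ ≤ _ := by linarith
      · have hd : |x - y| = |y| - |x| := by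
          rw [hsame, abs_of_nonpos (by linarith : |x| - |y| ≤ 0)]; ring
        have hstep := sw_step a b q (|y|) (|x|) ha hb hq0 hq2 hq3 (abs_nonneg x) hxy
        rw [hd]
        have h0 : (0:ℝ) ≤ (1 + |x|) ^ (-q) * (1 + |y|) ^ (-q) := by positivity
        have h1 : (0:ℝ) ≤ (1 + |y|) ^ (-q) * (1 + (|y| - |x|)) ^ (-q) :=
          mul_nonneg (Real.rpow_nonneg (by linarith) _) (Real.rpow_nonneg (by linarith) _)
        calc (1 + |x|) ^ (-a) * (1 + |y|) ^ (-a) * (1 + (|y| - |x|)) ^ (-b)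
            = (1 + |y|) ^ (-a) * (1 + |x|) ^ (-a) * (1 + (|y| - |x|)) ^ (-b) := by ring
          _ ≤ (1 + |x|) ^ (-q) * (1 + (|y| - |x|)) ^ (-q) := hstep
          _ ≤ _ := by linarith
    · -- opposite signs: 1+|x-y| = 1+|x|+|y|, so (1+|x-y|)^2 ≥ (1+|x|)(1+|y|)
      have hP : (1+|x|) * (1+|y|) ≤ (1+|x-y|) * (1+|x-y|) := by
        rw [hopp]; nlinarith [abs_nonneg x, abs_nonneg y]
      have hWb : (1+|x-y|)^(-b) ≤ ((1+|x|)*(1+|y|))^(-(b/2)) := by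
        have h1 : (1+|x-y|)^(-b) = ((1+|x-y|)*(1+|x-y|))^(-(b/2)) := by
          rw [Real.mul_rpow (by linarith) (by linarith), ← Real.rpow_add (by linarith : (0:ℝ) < 1+|x-y|)]
          congr 1; ring
        rw [h1]
        exact Real.rpow_le_rpow_of_nonpos (by positivity) hP (by linarith)
      have hmain : (1 + |x|) ^ (-a) * (1 + |y|) ^ (-a) * (1 + |x - y|) ^ (-b) ≤
          (1 + |x|) ^ (-q) * (1 + |y|) ^ (-q) := by
        calc (1 + |x|) ^ (-a) * (1 + |y|) ^ (-a) * (1 + |x - y|) ^ (-b)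
            ≤ (1 + |x|) ^ (-a) * (1 + |y|) ^ (-a) * (((1+|x|)*(1+|y|))^(-(b/2))) := by
              apply mul_le_mul_of_nonneg_left hWb (by positivity)
          _ = (1 + |x|) ^ (-a + -(b/2)) * (1 + |y|) ^ (-a + -(b/2)) := by
              rw [Real.mul_rpow (by linarith) (by linarith),
                Real.rpow_add (by linarith : (0:ℝ) < 1+|x|),
                Real.rpow_add (by linarith : (0:ℝ) < 1+|y|)]
              ring
          _ ≤ (1 + |x|) ^ (-q) * (1 + |y|) ^ (-q) :=
              mul_le_mul (Real.rpow_le_rpow_of_exponent_le hx1 (by linarith))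
                (Real.rpow_le_rpow_of_exponent_le hy1 (by linarith))
                (Real.rpow_nonneg (by linarith) _) (Real.rpow_nonneg (by linarith) _)
      have : (0:ℝ) ≤ (1 + |y|) ^ (-q) * (1 + |x - y|) ^ (-q)
          + (1 + |x|) ^ (-q) * (1 + |x - y|) ^ (-q) := by positivity
      linarith

theorem sw_meas (c : ℝ) : Measurable (fun x : ℝ => ENNReal.ofReal ((1 + |x|) ^ (-c))) := by
  apply (ENNReal.continuous_ofReal.comp ?_).measurable
  apply Continuous.rpow_const (by continuity)
  intro x; left; positivity

theorem sw_fin (q : ℝ) (hq : 1 < q) :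
    (∫⁻ x : ℝ, ENNReal.ofReal ((1 + |x|) ^ (-q))) < ⊤ := by
  have h : Integrable (fun x : ℝ => (1 + ‖x‖) ^ (-q)) :=
    integrable_one_add_norm (by simp [hq])
  have h2 := (hasFiniteIntegral_iff_ofReal
    (Filter.Eventually.of_forall (fun x => Real.rpow_nonneg (by positivity) _))).mp
    h.hasFiniteIntegral
  simpa [Real.norm_eq_abs] using h2

theorem sw_shift (F : ℝ → ℝ≥0∞) (hF : Measurable F) (x : ℝ) :
    ∫⁻ y : ℝ, F (x - y) = ∫⁻ y, F y := by
  have h1 : ∫⁻ y : ℝ, F (x - y) = ∫⁻ y : ℝ, F (x + -y) := by simp [sub_eq_add_neg]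
  have h2 : ∫⁻ y : ℝ, F (x + -y) = ∫⁻ y : ℝ, F (x + y) :=
    (Measure.measurePreserving_neg (volume : Measure ℝ)).lintegral_comp
      (hF.comp (measurable_const_add x))
  rw [h1, h2, lintegral_add_left_eq_self (fun t => F t) x]

theorem sw_main (a b : ℝ) (hab : 1 < a + b) (h2ab : 2 < 2 * a + b) (ha : 1 / 2 < a) :
    (∫⁻ x : ℝ, ∫⁻ y : ℝ,
        ENNReal.ofReal
          ((1 + |x|) ^ (-a) * (1 + |y|) ^ (-a) * (1 + |x - y|) ^ (-b))) < ⊤ := by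
  set q := min (min (a + b/2) (2*a)) (a+b) with hqdef
  have hq1 : 1 < q := lt_min (lt_min (by linarith) (by linarith)) (by linarith)
  have hqa : q ≤ a + b := min_le_right _ _
  have hqb : q ≤ 2*a := le_trans (min_le_left _ _) (min_le_right _ _)
  have hqc : q ≤ a + b/2 := le_trans (min_le_left _ _) (min_le_left _ _)
  set F : ℝ → ℝ≥0∞ := fun t => ENNReal.ofReal ((1 + |t|) ^ (-q)) with hFdef
  have hFm : Measurable F := sw_meas q
  have hJ : (∫⁻ x : ℝ, F x) < ⊤ := sw_fin q hq1
  have hpt : ∀ x y : ℝ,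
      ENNReal.ofReal ((1 + |x|) ^ (-a) * (1 + |y|) ^ (-a) * (1 + |x - y|) ^ (-b)) ≤
        F x * F y + (F y * F (x - y) + F x * F (x - y)) := by
    intro x y
    simp only [hFdef]
    refine le_trans (ENNReal.ofReal_le_ofReal
      (sw_kernel a b q (by linarith) (by linarith) hqa hqb hqc x y)) (le_of_eq ?_)
    rw [ENNReal.ofReal_add (by positivity) (by positivity),
      ENNReal.ofReal_add (by positivity) (by positivity),
      ENNReal.ofReal_mul (by positivity), ENNReal.ofReal_mul (by positivity),
      ENNReal.ofReal_mul (by positivity)]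
  have inner : ∀ x : ℝ,
      (∫⁻ y, (F x * F y + (F y * F (x - y) + F x * F (x - y)))) =
        F x * (∫⁻ t, F t) + ((∫⁻ y, F y * F (x - y)) + F x * (∫⁻ t, F t)) := by
    intro x
    have msub : Measurable fun y : ℝ => F (x - y) :=
      hFm.comp (measurable_const.sub measurable_id)
    have m1 : Measurable fun y : ℝ => F x * F y := hFm.const_mul _
    have m2 : Measurable fun y : ℝ => F y * F (x - y) := hFm.mul msub
    rw [lintegral_add_left m1, lintegral_add_left m2, lintegral_const_mul _ hFm,
      lintegral_const_mul _ msub, sw_shift F hFm x]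
  have mk : Measurable fun p : ℝ × ℝ => F p.2 * F (p.1 - p.2) :=
    (hFm.comp measurable_snd).mul (hFm.comp (measurable_fst.sub measurable_snd))
  have hswap : (∫⁻ x : ℝ, ∫⁻ y : ℝ, F y * F (x - y)) = (∫⁻ t, F t) * (∫⁻ t, F t) := by
    rw [lintegral_lintegral_swap mk.aemeasurable]
    have h1 : ∀ y : ℝ, (∫⁻ x, F y * F (x - y)) = F y * (∫⁻ t, F t) := by
      intro y
      have msub2 : Measurable fun x : ℝ => F (x - y) := by
        exact hFm.comp (measurable_id.sub measurable_const)
      rw [lintegral_const_mul _ msub2, lintegral_sub_right_eq_self F y]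
    rw [lintegral_congr h1, lintegral_mul_const _ hFm]
  have mG : Measurable fun x : ℝ => ∫⁻ y, F y * F (x - y) :=
    Measurable.lintegral_prod_right' mk
  have mFJ : Measurable fun x : ℝ => F x * (∫⁻ t, F t) := hFm.mul_const _
  have hJJ : (∫⁻ t, F t) * (∫⁻ t, F t) < ⊤ := ENNReal.mul_lt_top hJ hJ
  calc (∫⁻ x : ℝ, ∫⁻ y : ℝ,
        ENNReal.ofReal ((1 + |x|) ^ (-a) * (1 + |y|) ^ (-a) * (1 + |x - y|) ^ (-b)))
      ≤ ∫⁻ x : ℝ, ∫⁻ y : ℝ, (F x * F y + (F y * F (x - y) + F x * F (x - y))) :=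
        lintegral_mono fun x => lintegral_mono fun y => hpt x y
    _ = ∫⁻ x : ℝ, (F x * (∫⁻ t, F t) + ((∫⁻ y, F y * F (x - y)) + F x * (∫⁻ t, F t))) :=
        lintegral_congr inner
    _ = (∫⁻ x : ℝ, F x * (∫⁻ t, F t))
        + ((∫⁻ x : ℝ, ∫⁻ y, F y * F (x - y)) + (∫⁻ x : ℝ, F x * (∫⁻ t, F t))) := by
        rw [lintegral_add_left mFJ, lintegral_add_left mG]
    _ < ⊤ := by
        rw [hswap, lintegral_mul_const _ hFm]
        exact ENNReal.add_lt_top.mpr ⟨hJJ, ENNReal.add_lt_top.mpr ⟨hJJ, hJJ⟩⟩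

set_option maxHeartbeats 1000000 in
/-- Lemma (endpoint for the p > 2 Stein–Weiss theorem): if a + b > 1, 2a + b > 2
and a > 1/2 then the kernel (1+|x|)^{−a}(1+|y|)^{−a}(1+|x−y|)^{−b} is integrable on
ℝ × ℝ, and the associated bilinear form is bounded on L^∞(ℝ) × L^∞(ℝ). -/
theorem statement17
    (a b : ℝ) (hab : 1 < a + b) (h2ab : 2 < 2 * a + b) (ha : 1 / 2 < a) :
    (∫⁻ x : ℝ, ∫⁻ y : ℝ,
        ENNReal.ofReal
          ((1 + |x|) ^ (-a) * (1 + |y|) ^ (-a) * (1 + |x - y|) ^ (-b))) < ⊤ ∧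
    ∃ C : ℝ, 0 ≤ C ∧ ∀ f g : ℝ → ℂ,
      MemLp f ⊤ volume → MemLp g ⊤ volume →
      (∫⁻ x : ℝ, ∫⁻ y : ℝ,
          ENNReal.ofReal
            ((1 + |x|) ^ (-a) * (1 + |y|) ^ (-a) * (1 + |x - y|) ^ (-b)) *
            (‖f x‖₊ : ℝ≥0∞) * (‖g y‖₊ : ℝ≥0∞)) ≤
        ENNReal.ofReal C * eLpNorm f ⊤ volume * eLpNorm g ⊤ volume := by
  have hI : (∫⁻ x : ℝ, ∫⁻ y : ℝ,
      ENNReal.ofReal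
        ((1 + |x|) ^ (-a) * (1 + |y|) ^ (-a) * (1 + |x - y|) ^ (-b))) < ⊤ :=
    sw_main a b hab h2ab ha
  refine ⟨hI, ENNReal.toReal (∫⁻ x : ℝ, ∫⁻ y : ℝ,
      ENNReal.ofReal
        ((1 + |x|) ^ (-a) * (1 + |y|) ^ (-a) * (1 + |x - y|) ^ (-b))),
    ENNReal.toReal_nonneg, ?_⟩
  intro f g hf hg
  have hc : ∀ c : ℝ, Continuous fun t : ℝ => (1 + |t|) ^ (-c) := fun c =>
    Continuous.rpow_const (by continuity) (fun t => Or.inl (by positivity))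
  set K : ℝ → ℝ → ℝ≥0∞ := fun x y => ENNReal.ofReal
    ((1 + |x|) ^ (-a) * (1 + |y|) ^ (-a) * (1 + |x - y|) ^ (-b)) with hKdef
  have mk2 : Measurable fun p : ℝ × ℝ => K p.1 p.2 := by
    simp only [hKdef]
    exact (ENNReal.continuous_ofReal.comp
      ((((hc a).comp continuous_fst).mul ((hc a).comp continuous_snd)).mul
        ((hc b).comp (continuous_fst.sub continuous_snd)))).measurable
  have hKxm : ∀ x : ℝ, Measurable fun y : ℝ => K x y := fun x =>
    mk2.comp (measurable_const.prodMk measurable_id)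
  have mI : Measurable fun x : ℝ => ∫⁻ y, K x y :=
    Measurable.lintegral_prod_right' (f := fun p : ℝ × ℝ => K p.1 p.2) mk2
  have hfb : ∀ᵐ x ∂(volume : Measure ℝ), (‖f x‖₊ : ℝ≥0∞) ≤ eLpNorm f ⊤ volume := by
    rw [eLpNorm_exponent_top]
    exact enorm_ae_le_eLpNormEssSup f volume
  have hgb : ∀ᵐ y ∂(volume : Measure ℝ), (‖g y‖₊ : ℝ≥0∞) ≤ eLpNorm g ⊤ volume := by
    rw [eLpNorm_exponent_top]
    exact enorm_ae_le_eLpNormEssSup g volume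
  have step1 : ∀ x : ℝ,
      (∫⁻ y, K x y * (‖f x‖₊ : ℝ≥0∞) * (‖g y‖₊ : ℝ≥0∞)) ≤
        (∫⁻ y, K x y) * ((‖f x‖₊ : ℝ≥0∞) * eLpNorm g ⊤ volume) := by
    intro x
    calc (∫⁻ y, K x y * (‖f x‖₊ : ℝ≥0∞) * (‖g y‖₊ : ℝ≥0∞))
        ≤ ∫⁻ y, K x y * ((‖f x‖₊ : ℝ≥0∞) * eLpNorm g ⊤ volume) := by
          refine lintegral_mono_ae ?_
          filter_upwards [hgb] with y hy
          calc K x y * (‖f x‖₊ : ℝ≥0∞) * (‖g y‖₊ : ℝ≥0∞)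
              ≤ K x y * (‖f x‖₊ : ℝ≥0∞) * eLpNorm g ⊤ volume := mul_le_mul' le_rfl hy
            _ = K x y * ((‖f x‖₊ : ℝ≥0∞) * eLpNorm g ⊤ volume) := by rw [mul_assoc]
      _ = (∫⁻ y, K x y) * ((‖f x‖₊ : ℝ≥0∞) * eLpNorm g ⊤ volume) :=
          lintegral_mul_const _ (hKxm x)
  calc (∫⁻ x : ℝ, ∫⁻ y : ℝ, K x y * (‖f x‖₊ : ℝ≥0∞) * (‖g y‖₊ : ℝ≥0∞))
      ≤ ∫⁻ x : ℝ, (∫⁻ y, K x y) * (eLpNorm f ⊤ volume * eLpNorm g ⊤ volume) := by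
        refine lintegral_mono_ae ?_
        filter_upwards [hfb] with x hx
        exact le_trans (step1 x) (mul_le_mul' le_rfl (mul_le_mul_left hx _))
    _ = (∫⁻ x : ℝ, ∫⁻ y, K x y) * (eLpNorm f ⊤ volume * eLpNorm g ⊤ volume) :=
        lintegral_mul_const _ mI
    _ = ENNReal.ofReal (ENNReal.toReal (∫⁻ x : ℝ, ∫⁻ y : ℝ, K x y)) *
          eLpNorm f ⊤ volume * eLpNorm g ⊤ volume := by
        rw [ENNReal.ofReal_toReal hI.ne, mul_assoc]
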